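/- Let g be a real Lie algebra with an Ad-invariant inner product and let h ⊂ g be an abelian Lie subalgebra. With Ψ(A) = A^h (orthogonal projection onto h), the expression ⟨[X,ΨY]+[ΨX,Y],[ΨX,ΨY]⟩ + ⟨[ΨX,X],Ψ[ΨY,Y]⟩ − ⟨[X,ΨY],Ψ[X,ΨY]⟩ − ⟨[X,ΨY],Ψ[ΨX,Y]⟩ − ⟨[ΨX,Y],Ψ[ΨX,Y]⟩ vanishes for all commuting X, Y ∈ g. -/

import Mathlib

open RealInnerProductSpace

/-- With `Ψ` the orthogonal projection onto an abelian subalgebra `h`,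
the third-derivative expression `(1/6)κ'''(0)` vanishes for all commuting pairs. -/
theorem stmt_5 {g : Type*} [LieRing g] [LieAlgebra ℝ g]
    [NormedAddCommGroup g] [InnerProductSpace ℝ g]
    (hinv : ∀ A B C : g, ⟪⁅A, B⁆, C⟫ = ⟪A, ⁅B, C⁆⟫)
    (h : LieSubalgebra ℝ g)
    (hab : ∀ A ∈ h, ∀ B ∈ h, ⁅A, B⁆ = (0 : g))
    (Ψ : g →ₗ[ℝ] g)
    (hP1 : ∀ A : g, Ψ A ∈ h)
    (hP2 : ∀ A : g, ∀ B ∈ h, ⟪A - Ψ A, B⟫ = 0)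
    (X Y : g) (hXY : ⁅X, Y⁆ = 0) :
    ⟪⁅X, Ψ Y⁆ + ⁅Ψ X, Y⁆, ⁅Ψ X, Ψ Y⁆⟫ + ⟪⁅Ψ X, X⁆, Ψ ⁅Ψ Y, Y⁆⟫
      - ⟪⁅X, Ψ Y⁆, Ψ ⁅X, Ψ Y⁆⟫ - ⟪⁅X, Ψ Y⁆, Ψ ⁅Ψ X, Y⁆⟫
      - ⟪⁅Ψ X, Y⁆, Ψ ⁅Ψ X, Y⁆⟫ = 0 := by
  have hz : ∀ A : g, ⟪A, (0:g)⟫ = 0 := by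
    have e : ∀ C : g, ⟪(0:g), C⟫ = ⟪(0:g), (0:g)⟫ := by
      intro C
      calc ⟪(0:g), C⟫ = ⟪⁅(0:g), (0:g)⁆, C⟫ := by rw [zero_lie]
        _ = ⟪(0:g), ⁅(0:g), C⁆⟫ := hinv _ _ _
        _ = ⟪(0:g), (0:g)⟫ := by rw [zero_lie]
    intro A
    rw [real_inner_comm, e A]
    exact (e _).symm.trans (inner_zero_right _)
  have key : ∀ A B C : g, B ∈ h → C ∈ h → ⟪⁅A, B⁆, C⟫ = 0 := by
    intro A B C hB hC
    rw [hinv, hab B hB C hC, hz]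
  have key2 : ∀ A B C : g, B ∈ h → C ∈ h → ⟪⁅B, A⁆, C⟫ = 0 := by
    intro A B C hB hC
    rw [hinv, real_inner_comm, hinv, hab C hC B hB, hz]
  rw [hab (Ψ X) (hP1 X) (Ψ Y) (hP1 Y), hz,
      key2 X (Ψ X) (Ψ ⁅Ψ Y, Y⁆) (hP1 X) (hP1 _),
      key X (Ψ Y) (Ψ ⁅X, Ψ Y⁆) (hP1 Y) (hP1 _),
      key X (Ψ Y) (Ψ ⁅Ψ X, Y⁆) (hP1 Y) (hP1 _),
      key2 Y (Ψ X) (Ψ ⁅Ψ X, Y⁆) (hP1 X) (hP1 _)]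
  ring
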